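/- For every integer n ≥ 2, (2^(n²+n)/n!)·∏_{j=0}^{n-1} Γ((n+2+j)/2)·Γ(1/2)/(Γ((1+j)/2)·Γ((1+j)/2)·Γ((4+j)/2)) equals 2^(n²)·∏_{k=1}^{n} Cat(k), where Cat(k) = (1/(k+1))·binomial(2k,k). -/

import Mathlib

open Real Finset

noncomputable def auxN (n : ℕ) : ℝ := ∏ j ∈ Finset.Ico (n+2) (2*n+2), Real.Gamma ((j:ℝ)/2)

noncomputable def auxD (n : ℕ) : ℝ :=
  ∏ j ∈ Finset.range n, (Real.Gamma ((1+(j:ℝ))/2)^2 * Real.Gamma ((4+(j:ℝ))/2))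

lemma auxD_pos (n : ℕ) : 0 < auxD n := by
  refine Finset.prod_pos fun j _ => ?_
  have h1 : 0 < Real.Gamma ((1+(j:ℝ))/2) := Real.Gamma_pos_of_pos (by positivity)
  have h2 : 0 < Real.Gamma ((4+(j:ℝ))/2) := Real.Gamma_pos_of_pos (by positivity)
  positivity

lemma prod_eq (n : ℕ) :
    (∏ j ∈ Finset.range n,
      Gamma (((n : ℝ) + 2 + j) / 2) * Gamma (1 / 2) /
        (Gamma ((1 + (j : ℝ)) / 2) * Gamma ((1 + (j : ℝ)) / 2) * Gamma ((4 + (j : ℝ)) / 2))) =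
    auxN n * Gamma (1/2) ^ n / auxD n := by
  rw [Finset.prod_div_distrib, Finset.prod_mul_distrib, Finset.prod_const,
    Finset.card_range]
  congr 1
  · congr 1
    unfold auxN
    rw [Finset.prod_Ico_eq_prod_range]
    rw [show 2*n+2 - (n+2) = n by omega]
    refine Finset.prod_congr rfl fun i _ => ?_
    congr 1
    push_cast
    ring
  · unfold auxD
    refine Finset.prod_congr rfl fun j _ => ?_
    ring

lemma auxN_succ (n : ℕ) :
    auxN (n+1) * Gamma (((n:ℝ)+2)/2) =
      auxN n * (Gamma ((n:ℝ)+1) * Gamma ((n:ℝ)+3/2)) := by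
  have h1 : (∏ j ∈ Finset.Ico (n+2) (2*n+4), Real.Gamma ((j:ℝ)/2)) =
      Real.Gamma (((n+2:ℕ):ℝ)/2) * ∏ j ∈ Finset.Ico (n+3) (2*n+4), Real.Gamma ((j:ℝ)/2) :=
    Finset.prod_eq_prod_Ico_succ_bot (by omega) _
  have h2 : (∏ j ∈ Finset.Ico (n+2) (2*n+4), Real.Gamma ((j:ℝ)/2)) =
      ((∏ j ∈ Finset.Ico (n+2) (2*n+2), Real.Gamma ((j:ℝ)/2)) *
        Real.Gamma (((2*n+2:ℕ):ℝ)/2)) * Real.Gamma (((2*n+3:ℕ):ℝ)/2) := by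
    rw [show 2*n+4 = (2*n+3)+1 by omega, Finset.prod_Ico_succ_top (by omega),
      show 2*n+3 = (2*n+2)+1 by omega, Finset.prod_Ico_succ_top (by omega)]
  have e1 : Real.Gamma (((2*n+2:ℕ):ℝ)/2) = Gamma ((n:ℝ)+1) := by congr 1; push_cast; ring
  have e2 : Real.Gamma (((2*n+3:ℕ):ℝ)/2) = Gamma ((n:ℝ)+3/2) := by congr 1; push_cast; ring
  have e3 : Real.Gamma (((n+2:ℕ):ℝ)/2) = Gamma (((n:ℝ)+2)/2) := by congr 1; push_cast; ring
  rw [e1, e2] at h2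
  rw [e3] at h1
  unfold auxN
  have h3 : Finset.Ico (n+1+2) (2*(n+1)+2) = Finset.Ico (n+3) (2*n+4) := by
    congr 1 <;> omega
  rw [h3]
  rw [h1] at h2
  linear_combination h2

lemma ratio (n : ℕ) :
    (2:ℝ)^(2*n+2) / ((n:ℝ)+1) * (Gamma ((n:ℝ)+1) * Gamma ((n:ℝ)+3/2) * Gamma (1/2)) /
      (Gamma (((n:ℝ)+2)/2) * (Gamma ((1+(n:ℝ))/2)^2 * Gamma ((4+(n:ℝ))/2))) =
    (2:ℝ)^(2*n+1) * (1/((n:ℝ)+2) * (Nat.choose (2*(n+1)) (n+1) : ℝ)) := by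
  have hA : (0:ℝ) < Gamma (((n:ℝ)+1)/2) := Real.Gamma_pos_of_pos (by positivity)
  have hB : (0:ℝ) < Gamma (((n:ℝ)+2)/2) := Real.Gamma_pos_of_pos (by positivity)
  have h1 := Real.Gamma_mul_Gamma_add_half (((n:ℝ)+1)/2)
  rw [show ((n:ℝ)+1)/2 + 1/2 = ((n:ℝ)+2)/2 by ring,
      show (1:ℝ)-2*(((n:ℝ)+1)/2) = -(n:ℝ) by ring,
      show 2*(((n:ℝ)+1)/2) = (n:ℝ)+1 by ring,
      Real.rpow_neg (by norm_num), Real.rpow_natCast,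
      Real.Gamma_nat_eq_factorial] at h1
  have h2 := Real.Gamma_mul_Gamma_add_half ((n:ℝ)+1)
  rw [show (n:ℝ)+1+1/2 = (n:ℝ)+3/2 by ring,
      show (1:ℝ)-2*((n:ℝ)+1) = -((2*n+1:ℕ):ℝ) by push_cast; ring,
      show 2*((n:ℝ)+1) = ((2*n+1:ℕ):ℝ)+1 by push_cast; ring,
      Real.rpow_neg (by norm_num), Real.rpow_natCast,
      Real.Gamma_nat_eq_factorial] at h2
  rw [Real.Gamma_nat_eq_factorial] at h2
  have h3 : Gamma ((4+(n:ℝ))/2) = (((n:ℝ)+2)/2) * Gamma (((n:ℝ)+2)/2) := by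
    rw [show (4+(n:ℝ))/2 = ((n:ℝ)+2)/2 + 1 by ring,
      Real.Gamma_add_one (by positivity)]
  have k1 : (2*n+1).choose n * n.factorial * (n+1).factorial = (2*n+1).factorial := by
    have h := Nat.choose_mul_factorial_mul_factorial (show n ≤ 2*n+1 by omega)
    rw [show 2*n+1 - n = n+1 by omega] at h
    exact h
  have k2 : (2*(n+1)).choose (n+1) = 2 * ((2*n+1).choose n) := by
    rw [show 2*(n+1) = (2*n+1)+1 by ring, Nat.choose_succ_succ,
      show (2*n+1).choose (n+1) = (2*n+1).choose n from by
        have h := Nat.choose_symm (show n+1 ≤ 2*n+1 by omega)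
        rw [show 2*n+1-(n+1) = n by omega] at h
        exact h.symm]
    ring
  have hc : ((2*(n+1)).choose (n+1) : ℝ) * ((n:ℝ)+1) * ((n.factorial : ℝ))^2
      = 2 * ((2*n+1).factorial : ℝ) := by
    have c1 := congrArg (Nat.cast : ℕ → ℝ) k1
    rw [k2]
    push_cast [Nat.factorial_succ] at c1 ⊢
    linear_combination 2*c1
  have hBval : Gamma (((n:ℝ)+2)/2)
      = (n.factorial : ℝ) * ((2:ℝ)^n)⁻¹ * √π / Gamma (((n:ℝ)+1)/2) := by
    rw [eq_div_iff hA.ne']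
    linear_combination h1
  rw [show (1+(n:ℝ))/2 = ((n:ℝ)+1)/2 by ring, Real.Gamma_nat_eq_factorial, h2, h3,
    Real.Gamma_one_half_eq, hBval]
  have hp : (0:ℝ) < √π := Real.sqrt_pos.mpr Real.pi_pos
  have hF : (0:ℝ) < (n.factorial : ℝ) := by exact_mod_cast n.factorial_pos
  field_simp
  linear_combination (-(4 * (2:ℝ)^(4*n))) * hc

lemma main_lemma (n : ℕ) :
    (2:ℝ)^(n^2+n) / (n.factorial : ℝ) * (auxN n * Gamma (1/2)^n / auxD n) =
    (2:ℝ)^(n^2) * ∏ k ∈ Finset.Icc 1 n, (1/((k:ℝ)+1) * (Nat.choose (2*k) k : ℝ)) := by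
  induction n with
  | zero => simp [auxN, auxD]
  | succ n ih =>
    have hb : (0:ℝ) < Gamma (((n:ℝ)+2)/2) := Real.Gamma_pos_of_pos (by positivity)
    have hE1 : (0:ℝ) < Gamma ((1+(n:ℝ))/2) := Real.Gamma_pos_of_pos (by positivity)
    have hE2 : (0:ℝ) < Gamma ((4+(n:ℝ))/2) := Real.Gamma_pos_of_pos (by positivity)
    have hDn := auxD_pos n
    have hF : (0:ℝ) < (n.factorial : ℝ) := by exact_mod_cast n.factorial_pos
    have hNsucc : auxN (n+1)
        = auxN n * (Gamma ((n:ℝ)+1) * Gamma ((n:ℝ)+3/2)) / Gamma (((n:ℝ)+2)/2) := by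
      rw [eq_div_iff hb.ne']
      exact auxN_succ n
    have hDsucc : auxD (n+1) = auxD n * (Gamma ((1+(n:ℝ))/2)^2 * Gamma ((4+(n:ℝ))/2)) := by
      unfold auxD
      rw [Finset.prod_range_succ]
    have step : (2:ℝ)^((n+1)^2+(n+1)) / ((n+1).factorial : ℝ)
          * (auxN (n+1) * Gamma (1/2)^(n+1) / auxD (n+1))
        = ((2:ℝ)^(n^2+n) / (n.factorial : ℝ) * (auxN n * Gamma (1/2)^n / auxD n))
          * ((2:ℝ)^(2*n+2) / ((n:ℝ)+1) * (Gamma ((n:ℝ)+1) * Gamma ((n:ℝ)+3/2) * Gamma (1/2)) /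
            (Gamma (((n:ℝ)+2)/2) * (Gamma ((1+(n:ℝ))/2)^2 * Gamma ((4+(n:ℝ))/2)))) := by
      rw [hNsucc, hDsucc, Nat.factorial_succ]
      push_cast
      field_simp
      ring
    rw [step, ih, ratio, Finset.prod_Icc_succ_top (Nat.le_add_left 1 n)]
    push_cast
    ring

theorem stmt_3 (n : ℕ) (hn : 2 ≤ n) :
    (2 : ℝ) ^ (n ^ 2 + n) / (n.factorial : ℝ) *
      ∏ j ∈ Finset.range n,
        Gamma (((n : ℝ) + 2 + j) / 2) * Gamma (1 / 2) /
          (Gamma ((1 + (j : ℝ)) / 2) * Gamma ((1 + (j : ℝ)) / 2) * Gamma ((4 + (j : ℝ)) / 2)) =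
    (2 : ℝ) ^ (n ^ 2) *
      ∏ k ∈ Finset.Icc 1 n, (1 / ((k : ℝ) + 1) * (Nat.choose (2 * k) k : ℝ)) := by
  rw [prod_eq]
  exact main_lemma n
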